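/- With r^(i) > 0 as above and U^(i) = B(γ^(i), r^(i)): for all γ ∈ U^(i), (μ̂/2)I ⪯ A(γ) ⪯ 2L̂I; for γ̃ ∈ argmax_{γ∈U^(i)} q(γ,0), ‖B(γ̃)‖_F ≤ 2L̂R̂_p; and for each unit γ ∈ S^{m−1}, 2r^(i)‖Σγ_iA_i‖₂/(μ̂/2) ≤ 2 and 2r^(i)‖Σγ_iB_i‖_F/(2L̂R̂_p) ≤ 1/2. -/

import Mathlib

open Matrix

noncomputable def frobSq {p k : ℕ} (X : Matrix (Fin p) (Fin k) ℝ) : ℝ :=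
  Matrix.trace (Xᵀ * X)

noncomputable def frob {p k : ℕ} (X : Matrix (Fin p) (Fin k) ℝ) : ℝ :=
  Real.sqrt (frobSq X)

noncomputable def vnorm {m : ℕ} (v : Fin m → ℝ) : ℝ :=
  Real.sqrt (∑ i, (v i) ^ 2)

noncomputable def specNorm {p q : ℕ} (A : Matrix (Fin p) (Fin q) ℝ) : ℝ :=
  sSup {r | ∃ v : Fin q → ℝ, vnorm v = 1 ∧ r = vnorm (A *ᵥ v)}

/-- Smallest eigenvalue of a (symmetric) real matrix. -/
noncomputable def lamMin {p : ℕ} (A : Matrix (Fin p) (Fin p) ℝ) : ℝ :=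
  sInf {r | ∃ v : Fin p → ℝ, v ≠ 0 ∧ A *ᵥ v = r • v}

/-- Largest eigenvalue of a (symmetric) real matrix. -/
noncomputable def lamMax {p : ℕ} (A : Matrix (Fin p) (Fin p) ℝ) : ℝ :=
  sSup {r | ∃ v : Fin p → ℝ, v ≠ 0 ∧ A *ᵥ v = r • v}

noncomputable def Aaff {p m : ℕ} (A0 : Matrix (Fin p) (Fin p) ℝ)
    (Ai : Fin m → Matrix (Fin p) (Fin p) ℝ) (γ : Fin m → ℝ) :
    Matrix (Fin p) (Fin p) ℝ :=
  A0 + ∑ i, γ i • Ai i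

noncomputable def Baff {p k m : ℕ} (B0 : Matrix (Fin p) (Fin k) ℝ)
    (Bi : Fin m → Matrix (Fin p) (Fin k) ℝ) (γ : Fin m → ℝ) :
    Matrix (Fin p) (Fin k) ℝ :=
  B0 + ∑ i, γ i • Bi i


noncomputable def caff {m : ℕ} (c0 : ℝ) (ci : Fin m → ℝ) (γ : Fin m → ℝ) : ℝ :=
  c0 + ∑ i, γ i * ci i

open Pointwise

/- ### Auxiliary lemmas -/

lemma vnorm_nonneg {m : ℕ} (v : Fin m → ℝ) : 0 ≤ vnorm v := Real.sqrt_nonneg _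

lemma vnorm_sq {m : ℕ} (v : Fin m → ℝ) : vnorm v ^ 2 = ∑ i, (v i) ^ 2 :=
  Real.sq_sqrt (Finset.sum_nonneg fun _ _ => sq_nonneg _)

lemma vnorm_zero {m : ℕ} : vnorm (0 : Fin m → ℝ) = 0 := by
  unfold vnorm; simp

lemma vnorm_smul {m : ℕ} (c : ℝ) (v : Fin m → ℝ) : vnorm (c • v) = |c| * vnorm v := by
  unfold vnorm
  rw [← Real.sqrt_sq_eq_abs, ← Real.sqrt_mul (sq_nonneg c), Finset.mul_sum]
  congr 1
  exact Finset.sum_congr rfl fun i _ => by simp [Pi.smul_apply, mul_pow]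

lemma vnorm_pos {m : ℕ} {v : Fin m → ℝ} (hv : v ≠ 0) : 0 < vnorm v := by
  apply Real.sqrt_pos.mpr
  obtain ⟨i, hi⟩ := Function.ne_iff.mp hv
  exact Finset.sum_pos' (fun _ _ => sq_nonneg _)
    ⟨i, Finset.mem_univ i, lt_of_le_of_ne (sq_nonneg _) (Ne.symm (pow_ne_zero 2 hi))⟩

lemma dot_self_eq {m : ℕ} (x : Fin m → ℝ) : x ⬝ᵥ x = vnorm x ^ 2 := by
  rw [vnorm_sq, dotProduct]
  exact Finset.sum_congr rfl fun i _ => by ring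

lemma frobSq_eq {p k : ℕ} (X : Matrix (Fin p) (Fin k) ℝ) :
    frobSq X = ∑ j, ∑ i, (X i j) ^ 2 := by
  unfold frobSq
  rw [Matrix.trace]
  congr 1; ext j
  simp [Matrix.diag, Matrix.mul_apply, sq]

lemma frobSq_nonneg {p k : ℕ} (X : Matrix (Fin p) (Fin k) ℝ) : 0 ≤ frobSq X := by
  rw [frobSq_eq]; positivity

lemma frob_nonneg {p k : ℕ} (X : Matrix (Fin p) (Fin k) ℝ) : 0 ≤ frob X := Real.sqrt_nonneg _

lemma frob_sq {p k : ℕ} (X : Matrix (Fin p) (Fin k) ℝ) : frob X ^ 2 = frobSq X :=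
  Real.sq_sqrt (frobSq_nonneg X)

lemma frob_zero {p k : ℕ} : frob (0 : Matrix (Fin p) (Fin k) ℝ) = 0 := by
  unfold frob
  rw [frobSq_eq]
  simp

lemma frob_smul {p k : ℕ} (c : ℝ) (X : Matrix (Fin p) (Fin k) ℝ) :
    frob (c • X) = |c| * frob X := by
  unfold frob
  rw [← Real.sqrt_sq_eq_abs, ← Real.sqrt_mul (sq_nonneg c)]
  congr 1
  rw [frobSq_eq, frobSq_eq, Finset.mul_sum]
  congr 1; ext j; rw [Finset.mul_sum]; congr 1; ext i
  simp [Matrix.smul_apply, mul_pow]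

lemma dot_le_vnorm_mul {m : ℕ} (x y : Fin m → ℝ) : x ⬝ᵥ y ≤ vnorm x * vnorm y := by
  simpa [dotProduct, vnorm] using Real.sum_mul_le_sqrt_mul_sqrt Finset.univ x y

lemma abs_dot_le {m : ℕ} (x y : Fin m → ℝ) : |x ⬝ᵥ y| ≤ vnorm x * vnorm y := by
  rcases abs_cases (x ⬝ᵥ y) with ⟨h, _⟩ | ⟨h, _⟩
  · rw [h]; exact dot_le_vnorm_mul x y
  · rw [h]
    have h2 := dot_le_vnorm_mul (-x) y
    have h3 : vnorm (-x) = vnorm x := by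
      have : (-x) = (-1 : ℝ) • x := by ext i; simp
      rw [this, vnorm_smul]; simp
    rw [h3, neg_dotProduct] at h2; linarith

lemma frob_add_le {p k : ℕ} (X Y : Matrix (Fin p) (Fin k) ℝ) :
    frob (X + Y) ≤ frob X + frob Y := by
  have h1 : frob (X + Y) ^ 2 ≤ (frob X + frob Y) ^ 2 := by
    rw [frob_sq, frobSq_eq, add_sq, frob_sq, frob_sq, frobSq_eq, frobSq_eq]
    have hcs : ∑ j, ∑ i, X i j * Y i j ≤ frob X * frob Y := by
      have hprod : ∀ (Z W : Matrix (Fin p) (Fin k) ℝ),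
          ∑ q : Fin k × Fin p, Z q.2 q.1 * W q.2 q.1 = ∑ j, ∑ i, Z i j * W i j := by
        intro Z W
        rw [← Finset.univ_product_univ, Finset.sum_product]
      have := Real.sum_mul_le_sqrt_mul_sqrt (Finset.univ (α := Fin k × Fin p))
        (fun q => X q.2 q.1) (fun q => Y q.2 q.1)
      calc ∑ j, ∑ i, X i j * Y i j
          = ∑ q : Fin k × Fin p, X q.2 q.1 * Y q.2 q.1 := (hprod X Y).symm
        _ ≤ _ := this
        _ = frob X * frob Y := by
            unfold frob
            congr 1
            · rw [frobSq_eq]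
              have := hprod X X; simp only [← sq] at this
              rw [← this]
            · rw [frobSq_eq]
              have := hprod Y Y; simp only [← sq] at this
              rw [← this]
    calc ∑ j, ∑ i, (X i j + Y i j) ^ 2
        = (∑ j, ∑ i, X i j ^ 2) + 2 * (∑ j, ∑ i, X i j * Y i j)
            + ∑ j, ∑ i, Y i j ^ 2 := by
          simp only [Matrix.add_apply, add_sq, Finset.sum_add_distrib, Finset.mul_sum]
          ring
      _ ≤ _ := by nlinarith [frob_nonneg X, frob_nonneg Y]
  nlinarith [frob_nonneg (X + Y), frob_nonneg X, frob_nonneg Y]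

lemma mulVec_vnorm_le_frob {p q : ℕ} (M : Matrix (Fin p) (Fin q) ℝ) (x : Fin q → ℝ) :
    vnorm (M *ᵥ x) ≤ frob M * vnorm x := by
  have hsq : vnorm (M *ᵥ x) ^ 2 ≤ (frob M * vnorm x) ^ 2 := by
    rw [vnorm_sq, mul_pow, vnorm_sq, frob_sq, frobSq_eq]
    have hrow : ∀ i, (M *ᵥ x) i ^ 2 ≤ (∑ j, M i j ^ 2) * ∑ j, x j ^ 2 := fun i =>
      Finset.sum_mul_sq_le_sq_mul_sq Finset.univ (fun j => M i j) x
    calc ∑ i, (M *ᵥ x) i ^ 2 ≤ ∑ i, (∑ j, M i j ^ 2) * ∑ j, x j ^ 2 :=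
          Finset.sum_le_sum fun i _ => hrow i
      _ = (∑ j, ∑ i, M i j ^ 2) * ∑ j, x j ^ 2 := by
          rw [← Finset.sum_mul, Finset.sum_comm]
  nlinarith [vnorm_nonneg (M *ᵥ x), mul_nonneg (frob_nonneg M) (vnorm_nonneg x)]

lemma specSet_bddAbove {p q : ℕ} (M : Matrix (Fin p) (Fin q) ℝ) :
    BddAbove {r | ∃ v : Fin q → ℝ, vnorm v = 1 ∧ r = vnorm (M *ᵥ v)} := by
  refine ⟨frob M, fun r hr => ?_⟩
  obtain ⟨v, hv1, rfl⟩ := hr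
  simpa [hv1] using mulVec_vnorm_le_frob M v

lemma mulVec_vnorm_le_spec {p q : ℕ} (M : Matrix (Fin p) (Fin q) ℝ) (x : Fin q → ℝ) :
    vnorm (M *ᵥ x) ≤ specNorm M * vnorm x := by
  by_cases hx : x = 0
  · subst hx
    simp only [mulVec_zero]
    rw [vnorm_zero, vnorm_zero, mul_zero]
  · have hxp := vnorm_pos hx
    set v := (vnorm x)⁻¹ • x with hv
    have hv1 : vnorm v = 1 := by
      rw [hv, vnorm_smul, abs_of_pos (inv_pos.mpr hxp), inv_mul_cancel₀ hxp.ne']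
    have hle : vnorm (M *ᵥ v) ≤ specNorm M :=
      le_csSup (specSet_bddAbove M) ⟨v, hv1, rfl⟩
    have hMx : M *ᵥ x = vnorm x • (M *ᵥ v) := by
      rw [hv, mulVec_smul, smul_smul, mul_inv_cancel₀ hxp.ne', one_smul]
    rw [hMx, vnorm_smul, abs_of_pos hxp, mul_comm]
    exact mul_le_mul_of_nonneg_right hle (le_of_lt hxp)

lemma abs_quad_le_spec {p : ℕ} (M : Matrix (Fin p) (Fin p) ℝ) (x : Fin p → ℝ) :
    |x ⬝ᵥ M *ᵥ x| ≤ specNorm M * vnorm x ^ 2 := by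
  calc |x ⬝ᵥ M *ᵥ x| ≤ vnorm x * vnorm (M *ᵥ x) := abs_dot_le x (M *ᵥ x)
    _ ≤ vnorm x * (specNorm M * vnorm x) :=
        mul_le_mul_of_nonneg_left (mulVec_vnorm_le_spec M x) (vnorm_nonneg x)
    _ = specNorm M * vnorm x ^ 2 := by ring

lemma isHermitian_of_symm {p : ℕ} {N : Matrix (Fin p) (Fin p) ℝ} (h : Nᵀ = N) :
    N.IsHermitian := by
  ext i j
  rw [conjTranspose_apply, star_trivial]
  exact congrFun (congrFun h i) j

def eigSet {p : ℕ} (N : Matrix (Fin p) (Fin p) ℝ) : Set ℝ :=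
  {r | ∃ v : Fin p → ℝ, v ≠ 0 ∧ N *ᵥ v = r • v}

lemma eigSet_abs_le {p : ℕ} {N : Matrix (Fin p) (Fin p) ℝ} {r : ℝ} (hr : r ∈ eigSet N) :
    |r| ≤ frob N := by
  obtain ⟨v, hv, hNv⟩ := hr
  have h1 : vnorm (N *ᵥ v) = |r| * vnorm v := by rw [hNv, vnorm_smul]
  have h2 := mulVec_vnorm_le_frob N v
  rw [h1] at h2
  exact le_of_mul_le_mul_right (by linarith) (vnorm_pos hv)

lemma eigSet_bddBelow {p : ℕ} (N : Matrix (Fin p) (Fin p) ℝ) : BddBelow (eigSet N) :=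
  ⟨-frob N, fun _ hr => neg_le_of_abs_le (eigSet_abs_le hr)⟩

lemma eigSet_bddAbove {p : ℕ} (N : Matrix (Fin p) (Fin p) ℝ) : BddAbove (eigSet N) :=
  ⟨frob N, fun _ hr => le_of_abs_le (eigSet_abs_le hr)⟩

lemma eigenvalues_mem_eigSet {p : ℕ} {N : Matrix (Fin p) (Fin p) ℝ} (hN : N.IsHermitian)
    (i : Fin p) : hN.eigenvalues i ∈ eigSet N := by
  refine ⟨⇑(hN.eigenvectorBasis i), ?_, hN.mulVec_eigenvectorBasis i⟩
  intro h
  exact hN.eigenvectorBasis.orthonormal.ne_zero i (by ext j; exact congrFun h j)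

lemma sub_smul_one_posSemidef {p : ℕ} {N : Matrix (Fin p) (Fin p) ℝ} (hN : N.IsHermitian)
    {c : ℝ} (hc : ∀ i, c ≤ hN.eigenvalues i) :
    (N - c • (1 : Matrix (Fin p) (Fin p) ℝ)).PosSemidef := by
  have hU : (hN.eigenvectorUnitary : Matrix (Fin p) (Fin p) ℝ) *
      star (hN.eigenvectorUnitary : Matrix (Fin p) (Fin p) ℝ) = 1 :=
    Matrix.mem_unitaryGroup_iff.mp hN.eigenvectorUnitary.2
  have key : N - c • (1 : Matrix (Fin p) (Fin p) ℝ) =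
      (hN.eigenvectorUnitary : Matrix (Fin p) (Fin p) ℝ) *
        diagonal (fun i => hN.eigenvalues i - c) *
        (hN.eigenvectorUnitary : Matrix (Fin p) (Fin p) ℝ)ᴴ := by
    conv_lhs => rw [hN.spectral_theorem]
    have hdiag : diagonal (fun i => hN.eigenvalues i - c) =
        diagonal (RCLike.ofReal ∘ hN.eigenvalues) - c • (1 : Matrix (Fin p) (Fin p) ℝ) := by
      ext i j
      rcases eq_or_ne i j with rfl | h
      · simp [Matrix.diagonal_apply_eq, Matrix.one_apply_eq]
      · simp [Matrix.diagonal_apply_ne _ h, Matrix.one_apply_ne h]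
    rw [hdiag, Matrix.mul_sub, Matrix.sub_mul]
    congr 1
    rw [Matrix.mul_smul, Matrix.smul_mul, Matrix.mul_one]
    rw [show (hN.eigenvectorUnitary : Matrix (Fin p) (Fin p) ℝ)ᴴ =
      star (hN.eigenvectorUnitary : Matrix (Fin p) (Fin p) ℝ) from rfl, hU]
  rw [key]
  exact (Matrix.PosSemidef.diagonal (fun i => sub_nonneg.mpr (hc i))).mul_mul_conjTranspose_same _

lemma quad_ge_lamMin {p : ℕ} {N : Matrix (Fin p) (Fin p) ℝ} (hN : N.IsHermitian)
    (x : Fin p → ℝ) : lamMin N * vnorm x ^ 2 ≤ x ⬝ᵥ N *ᵥ x := by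
  have hc : ∀ i, lamMin N ≤ hN.eigenvalues i := fun i =>
    csInf_le (eigSet_bddBelow N) (eigenvalues_mem_eigSet hN i)
  have hpsd := sub_smul_one_posSemidef hN hc
  have h := hpsd.dotProduct_mulVec_nonneg x
  rw [star_trivial, Matrix.sub_mulVec, dotProduct_sub, Matrix.smul_mulVec,
    Matrix.one_mulVec, dotProduct_smul] at h
  rw [smul_eq_mul, dot_self_eq] at h
  linarith

lemma eigSet_neg {p : ℕ} (N : Matrix (Fin p) (Fin p) ℝ) : eigSet (-N) = -eigSet N := by
  ext r
  constructor
  · rintro ⟨v, hv, hNv⟩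
    refine ⟨v, hv, ?_⟩
    have : N *ᵥ v = -(r • v) := by
      have := congrArg Neg.neg hNv
      simpa [Matrix.neg_mulVec] using this
    rw [this, ← neg_smul]
  · rintro ⟨v, hv, hNv⟩
    refine ⟨v, hv, ?_⟩
    rw [Matrix.neg_mulVec, hNv, neg_smul, neg_neg]

lemma quad_le_lamMax {p : ℕ} {N : Matrix (Fin p) (Fin p) ℝ} (hN : N.IsHermitian)
    (x : Fin p → ℝ) : x ⬝ᵥ N *ᵥ x ≤ lamMax N * vnorm x ^ 2 := by
  have h := quad_ge_lamMin hN.neg x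
  have hlam : lamMin (-N) = -lamMax N := by
    unfold lamMin lamMax
    rw [show {r | ∃ v : Fin p → ℝ, v ≠ 0 ∧ (-N) *ᵥ v = r • v} = eigSet (-N) from rfl,
      show {r | ∃ v : Fin p → ℝ, v ≠ 0 ∧ N *ᵥ v = r • v} = eigSet N from rfl,
      eigSet_neg]
    have hset : -eigSet N = (-1 : ℝ) • eigSet N := by
      ext r
      simp only [Set.mem_neg, Set.mem_smul_set]
      constructor
      · intro hr; exact ⟨-r, hr, by simp⟩
      · rintro ⟨y, hy, rfl⟩; simpa using hy
    rw [hset, Real.sInf_smul_of_nonpos (by norm_num : (-1:ℝ) ≤ 0), smul_eq_mul]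
    ring
  rw [hlam, Matrix.neg_mulVec, dotProduct_neg] at h
  linarith


/-- the ball `U⁽ⁱ⁾ = B(γ⁽ⁱ⁾, r⁽ⁱ⁾)` satisfies the regularity
estimates with `μ = μ̂/2`, `L = 2L̂`, `R = R̂_p`, `D = 2r⁽ⁱ⁾`, `H = 2`. -/
theorem stmt_16 {p k m : ℕ}
    (A0 : Matrix (Fin p) (Fin p) ℝ) (Ai : Fin m → Matrix (Fin p) (Fin p) ℝ)
    (B0 : Matrix (Fin p) (Fin k) ℝ) (Bi : Fin m → Matrix (Fin p) (Fin k) ℝ)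
    (c0 : ℝ) (ci : Fin m → ℝ)
    (hA0 : A0ᵀ = A0) (hAi : ∀ i, (Ai i)ᵀ = Ai i)
    (μh Lh Rd Rp ρ : ℝ)
    (hμ : 0 < μh) (hμL : μh ≤ Lh) (hRp : 0 < Rp) (hRd : 1 ≤ Rd) (hρ : 0 < ρ)
    (γi : Fin m → ℝ)
    (hρ2 : ∀ γ : Fin m → ℝ, vnorm γ = 1 →
      specNorm (∑ i, γ i • Ai i) ≤ ρ ∧ frob (∑ i, γ i • Bi i) / Rp ≤ ρ)
    (r : ℝ)
    (hr : r = min (min (min (min (μh / (2 * ρ)) (2 * Rd - vnorm γi))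
        ((lamMin (Aaff A0 Ai γi) - μh / 2) / ρ))
        ((2 * Lh - lamMax (Aaff A0 Ai γi)) / ρ))
        ((2 * Lh * Rp - frob (Baff B0 Bi γi)) / (ρ * Rp)))
    (hrpos : 0 < r) :
    -- (1) (μ̂/2) I ⪯ A(γ) ⪯ 2 L̂ I on the ball
    (∀ γ : Fin m → ℝ, vnorm (γ - γi) ≤ r →
      (Aaff A0 Ai γ - (μh / 2) • (1 : Matrix (Fin p) (Fin p) ℝ)).PosSemidef ∧
      ((2 * Lh) • (1 : Matrix (Fin p) (Fin p) ℝ) - Aaff A0 Ai γ).PosSemidef) ∧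
    -- (2) any argmax γ̃ of q(·, 0) over the ball satisfies ‖B(γ̃)‖_F ≤ 2 L̂ R̂_p
    (∀ γt : Fin m → ℝ, vnorm (γt - γi) ≤ r →
      caff c0 ci γt = sSup {x | ∃ γ : Fin m → ℝ, vnorm (γ - γi) ≤ r ∧ x = caff c0 ci γ} →
      frob (Baff B0 Bi γt) ≤ 2 * Lh * Rp) ∧
    -- (3) regularity estimates for D = 2 r, H = 2
    (∀ γ : Fin m → ℝ, vnorm γ = 1 →
      2 * r * specNorm (∑ i, γ i • Ai i) / (μh / 2) ≤ 2 ∧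
      2 * r * frob (∑ i, γ i • Bi i) / (2 * Lh * Rp) ≤ 1 / 2) := by
  have hLh : 0 < Lh := lt_of_lt_of_le hμ hμL
  -- extract the five bounds on r
  have h1 : r ≤ μh / (2 * ρ) := by
    rw [hr]
    exact le_trans (min_le_left _ _) (le_trans (min_le_left _ _)
      (le_trans (min_le_left _ _) (min_le_left _ _)))
  have h3 : r ≤ (lamMin (Aaff A0 Ai γi) - μh / 2) / ρ := by
    rw [hr]
    exact le_trans (min_le_left _ _) (le_trans (min_le_left _ _) (min_le_right _ _))
  have h4 : r ≤ (2 * Lh - lamMax (Aaff A0 Ai γi)) / ρ := by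
    rw [hr]
    exact le_trans (min_le_left _ _) (min_le_right _ _)
  have h5 : r ≤ (2 * Lh * Rp - frob (Baff B0 Bi γi)) / (ρ * Rp) := by
    rw [hr]
    exact min_le_right _ _
  have hρr : ρ * r ≤ μh / 2 := by
    rw [le_div_iff₀ (by positivity)] at h1
    linarith
  have hmin : μh / 2 + ρ * r ≤ lamMin (Aaff A0 Ai γi) := by
    rw [le_div_iff₀ hρ] at h3
    linarith
  have hmax : lamMax (Aaff A0 Ai γi) ≤ 2 * Lh - ρ * r := by
    rw [le_div_iff₀ hρ] at h4
    linarith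
  have hfro : frob (Baff B0 Bi γi) ≤ 2 * Lh * Rp - ρ * Rp * r := by
    rw [le_div_iff₀ (by positivity)] at h5
    linarith
  -- perturbation bound for the A-part
  have hquadE : ∀ (δ : Fin m → ℝ) (x : Fin p → ℝ),
      |x ⬝ᵥ (∑ i, δ i • Ai i) *ᵥ x| ≤ ρ * vnorm δ * vnorm x ^ 2 := by
    intro δ x
    by_cases hδ : δ = 0
    · subst hδ
      simp only [Pi.zero_apply, zero_smul, Finset.sum_const_zero, Matrix.zero_mulVec,
        dotProduct_zero, abs_zero, vnorm_zero]
      positivity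
    · have hδp := vnorm_pos hδ
      set u : Fin m → ℝ := (vnorm δ)⁻¹ • δ with hu
      have hu1 : vnorm u = 1 := by
        rw [hu, vnorm_smul, abs_of_pos (inv_pos.mpr hδp), inv_mul_cancel₀ hδp.ne']
      have hsum : (∑ i, δ i • Ai i) = vnorm δ • ∑ i, u i • Ai i := by
        rw [Finset.smul_sum]
        refine Finset.sum_congr rfl fun i _ => ?_
        rw [hu, smul_smul]
        congr 1
        simp only [Pi.smul_apply, smul_eq_mul]
        field_simp
      rw [hsum, Matrix.smul_mulVec, dotProduct_smul, smul_eq_mul, abs_mul,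
        abs_of_pos hδp]
      have := abs_quad_le_spec (∑ i, u i • Ai i) x
      have hsp := (hρ2 u hu1).1
      calc vnorm δ * |x ⬝ᵥ (∑ i, u i • Ai i) *ᵥ x|
          ≤ vnorm δ * (ρ * vnorm x ^ 2) := by
            refine mul_le_mul_of_nonneg_left ?_ (le_of_lt hδp)
            exact le_trans this (mul_le_mul_of_nonneg_right hsp (sq_nonneg _))
        _ = ρ * vnorm δ * vnorm x ^ 2 := by ring
  -- perturbation bound for the B-part
  have hfrE : ∀ (δ : Fin m → ℝ), frob (∑ i, δ i • Bi i) ≤ ρ * Rp * vnorm δ := by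
    intro δ
    by_cases hδ : δ = 0
    · subst hδ
      simp only [Pi.zero_apply, zero_smul, Finset.sum_const_zero, frob_zero, vnorm_zero,
        mul_zero]
      exact le_refl 0
    · have hδp := vnorm_pos hδ
      set u : Fin m → ℝ := (vnorm δ)⁻¹ • δ with hu
      have hu1 : vnorm u = 1 := by
        rw [hu, vnorm_smul, abs_of_pos (inv_pos.mpr hδp), inv_mul_cancel₀ hδp.ne']
      have hsum : (∑ i, δ i • Bi i) = vnorm δ • ∑ i, u i • Bi i := by
        rw [Finset.smul_sum]
        refine Finset.sum_congr rfl fun i _ => ?_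
        rw [hu, smul_smul]
        congr 1
        simp only [Pi.smul_apply, smul_eq_mul]
        field_simp
      have hfu : frob (∑ i, u i • Bi i) ≤ ρ * Rp := by
        have := (hρ2 u hu1).2
        rw [div_le_iff₀ hRp] at this
        linarith
      rw [hsum, frob_smul, abs_of_pos hδp]
      calc vnorm δ * frob (∑ i, u i • Bi i) ≤ vnorm δ * (ρ * Rp) :=
            mul_le_mul_of_nonneg_left hfu (le_of_lt hδp)
        _ = ρ * Rp * vnorm δ := by ring
  -- symmetry of Aaff
  have hAaffT : ∀ γ : Fin m → ℝ, (Aaff A0 Ai γ)ᵀ = Aaff A0 Ai γ := by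
    intro γ
    unfold Aaff
    rw [Matrix.transpose_add, hA0, Matrix.transpose_sum]
    congr 1
    exact Finset.sum_congr rfl fun i _ => by rw [Matrix.transpose_smul, hAi i]
  -- decomposition
  have hAsplit : ∀ γ : Fin m → ℝ,
      Aaff A0 Ai γ = Aaff A0 Ai γi + ∑ i, (γ - γi) i • Ai i := by
    intro γ
    unfold Aaff
    rw [add_assoc, ← Finset.sum_add_distrib]
    congr 1
    exact Finset.sum_congr rfl fun i _ => by
      rw [← add_smul]
      congr 1
      simp
  have hBsplit : ∀ γ : Fin m → ℝ,
      Baff B0 Bi γ = Baff B0 Bi γi + ∑ i, (γ - γi) i • Bi i := by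
    intro γ
    unfold Baff
    rw [add_assoc, ← Finset.sum_add_distrib]
    congr 1
    exact Finset.sum_congr rfl fun i _ => by
      rw [← add_smul]
      congr 1
      simp
  refine ⟨?_, ?_, ?_⟩
  · -- part 1
    intro γ hγ
    set δ := γ - γi with hδdef
    have hHi : (Aaff A0 Ai γi).IsHermitian := isHermitian_of_symm (hAaffT γi)
    have hquadγ : ∀ x : Fin p → ℝ,
        (μh / 2) * vnorm x ^ 2 ≤ x ⬝ᵥ (Aaff A0 Ai γ) *ᵥ x ∧
        x ⬝ᵥ (Aaff A0 Ai γ) *ᵥ x ≤ (2 * Lh) * vnorm x ^ 2 := by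
      intro x
      have hsplit := hAsplit γ
      have hE := hquadE δ x
      have hEr : |x ⬝ᵥ (∑ i, δ i • Ai i) *ᵥ x| ≤ ρ * r * vnorm x ^ 2 := by
        refine le_trans hE ?_
        have : ρ * vnorm δ ≤ ρ * r := mul_le_mul_of_nonneg_left hγ (le_of_lt hρ)
        nlinarith [sq_nonneg (vnorm x)]
      have hEub := (abs_le.mp hEr).2
      have hElb := (abs_le.mp hEr).1
      have hdecomp : x ⬝ᵥ (Aaff A0 Ai γ) *ᵥ x =
          x ⬝ᵥ (Aaff A0 Ai γi) *ᵥ x + x ⬝ᵥ (∑ i, δ i • Ai i) *ᵥ x := by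
        rw [hsplit, Matrix.add_mulVec, dotProduct_add]
      have hlo := quad_ge_lamMin hHi x
      have hhi := quad_le_lamMax hHi x
      constructor
      · rw [hdecomp]
        nlinarith [sq_nonneg (vnorm x)]
      · rw [hdecomp]
        nlinarith [sq_nonneg (vnorm x)]
    constructor
    · refine .of_dotProduct_mulVec_nonneg (isHermitian_of_symm ?_) fun x => ?_
      · rw [Matrix.transpose_sub, Matrix.transpose_smul, Matrix.transpose_one, hAaffT γ]
      · rw [star_trivial, Matrix.sub_mulVec, dotProduct_sub, Matrix.smul_mulVec,
          Matrix.one_mulVec, dotProduct_smul, smul_eq_mul, dot_self_eq]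
        have := (hquadγ x).1
        linarith
    · refine .of_dotProduct_mulVec_nonneg (isHermitian_of_symm ?_) fun x => ?_
      · rw [Matrix.transpose_sub, Matrix.transpose_smul, Matrix.transpose_one, hAaffT γ]
      · rw [star_trivial, Matrix.sub_mulVec, dotProduct_sub, Matrix.smul_mulVec,
          Matrix.one_mulVec, dotProduct_smul, smul_eq_mul, dot_self_eq]
        have := (hquadγ x).2
        linarith
  · -- part 2
    intro γt hγt _
    rw [hBsplit γt]
    calc frob (Baff B0 Bi γi + ∑ i, (γt - γi) i • Bi i)
        ≤ frob (Baff B0 Bi γi) + frob (∑ i, (γt - γi) i • Bi i) := frob_add_le _ _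
      _ ≤ (2 * Lh * Rp - ρ * Rp * r) + ρ * Rp * r := by
          have := hfrE (γt - γi)
          have h2 : ρ * Rp * vnorm (γt - γi) ≤ ρ * Rp * r :=
            mul_le_mul_of_nonneg_left hγt (by positivity)
          have := le_trans (hfrE (γt - γi)) h2
          linarith
      _ = 2 * Lh * Rp := by ring
  · -- part 3
    intro γ hγ1
    obtain ⟨hs, hf⟩ := hρ2 γ hγ1
    have hfRp : frob (∑ i, γ i • Bi i) ≤ ρ * Rp := by
      rw [div_le_iff₀ hRp] at hf
      linarith
    constructor
    · rw [div_le_iff₀ (by positivity : (0:ℝ) < μh / 2)]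
      nlinarith [frob_nonneg (∑ i, γ i • Bi i)]
    · rw [div_le_iff₀ (by positivity : (0:ℝ) < 2 * Lh * Rp)]
      nlinarith [frob_nonneg (∑ i, γ i • Bi i)]
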